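/- Let μ be a symmetric K×K tridiagonal matrix with zero diagonal and nonnegative entries μ_{r,r+1}, let α_1,…,α_K ≥ 0 with Σα_r = 1, and set M = (μ_{rs}·α_s). Then the spectral radius of [M²]^(oo) satisfies ρ([M²]^(oo)) ≤ (1/4)·max_{r} μ_{r,r+1}², and the supremum of ρ([M²]^(oo)) over all such (α_1,…,α_K) equals (1/4)·max_r μ_{r,r+1}². -/

import Mathlib

open scoped ENNReal

lemma sum_ind (N i : ℕ) (v : ℕ → ℝ) :
    ∑ j ∈ Finset.range N, (if i + 1 = j ∨ j + 1 = i then v j else 0)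
      = (if i + 1 < N then v (i+1) else 0) + (if 0 < i ∧ i ≤ N then v (i-1) else 0) := by
  have split : ∀ j ∈ Finset.range N, (if i + 1 = j ∨ j + 1 = i then v j else 0)
      = (if j = i + 1 then v j else 0) + (if 0 < i ∧ j = i - 1 then v j else 0) := by
    intro j _
    split_ifs <;> first | (exfalso; omega) | ring1
  rw [Finset.sum_congr rfl split, Finset.sum_add_distrib, Finset.sum_ite_eq' (Finset.range N) (i+1) v]
  congr 1
  · simp [Finset.mem_range]
  · by_cases hi : 0 < i
    · have : ∀ j ∈ Finset.range N, (if 0 < i ∧ j = i - 1 then v j else 0) = (if j = i - 1 then v j else 0) := by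
        intro j _; simp [hi]
      rw [Finset.sum_congr rfl this, Finset.sum_ite_eq' (Finset.range N) (i-1) v]
      simp only [Finset.mem_range]
      have h1 : i - 1 < N ↔ (0 < i ∧ i ≤ N) := by omega
      simp [h1, hi]
    · simp [hi]

lemma adjProdSum (N : ℕ) (g : ℕ → ℝ) (hg : ∀ p, 0 ≤ g p) :
    ∑ p ∈ Finset.range N, g p * g (p+1) ≤ (∑ p ∈ Finset.range (N+1), g p)^2 / 4 := by
  classical
  set Ev := (Finset.range (N+1)).filter (fun p => p % 2 = 0) with hEv
  set Od := (Finset.range (N+1)).filter (fun p => ¬ p % 2 = 0) with hOd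
  set E := ∑ p ∈ Ev, g p with hE
  set O := ∑ p ∈ Od, g p with hO
  have hEO : E + O = ∑ p ∈ Finset.range (N+1), g p :=
    Finset.sum_filter_add_sum_filter_not _ _ _
  have key : ∑ p ∈ Finset.range N, g p * g (p+1) ≤ E * O := by
    have hprod : E * O = ∑ q ∈ Ev ×ˢ Od, g q.1 * g q.2 := by
      rw [Finset.sum_product]
      exact Finset.sum_mul_sum Ev Od g g
    set ι : ℕ → ℕ × ℕ := fun p => if p % 2 = 0 then (p, p+1) else (p+1, p) with hι
    have hinj : ∀ p ∈ Finset.range N, ∀ q ∈ Finset.range N, ι p = ι q → p = q := by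
      intro p _ q _ h
      simp only [hι] at h
      split_ifs at h <;> · simp only [Prod.mk.injEq] at h; omega
    have him : (Finset.range N).image ι ⊆ Ev ×ˢ Od := by
      intro q hq
      simp only [Finset.mem_image, Finset.mem_range] at hq
      obtain ⟨p, hp, rfl⟩ := hq
      simp only [hι, Finset.mem_product, hEv, hOd, Finset.mem_filter, Finset.mem_range]
      split_ifs <;> constructor <;> constructor <;> omega
    have heq : ∑ p ∈ Finset.range N, g p * g (p+1) = ∑ q ∈ (Finset.range N).image ι, g q.1 * g q.2 := by
      rw [Finset.sum_image hinj]
      apply Finset.sum_congr rfl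
      intro p _
      simp only [hι]
      split_ifs <;> simp [mul_comm]
    rw [heq, hprod]
    apply Finset.sum_le_sum_of_subset_of_nonneg him
    intro q _ _
    exact mul_nonneg (hg _) (hg _)
  have hEnn : 0 ≤ E := Finset.sum_nonneg fun p _ => hg p
  have hOnn : 0 ≤ O := Finset.sum_nonneg fun p _ => hg p
  calc ∑ p ∈ Finset.range N, g p * g (p+1) ≤ E * O := key
    _ ≤ (E + O)^2 / 4 := by nlinarith [sq_nonneg (E - O)]
    _ = (∑ p ∈ Finset.range (N+1), g p)^2 / 4 := by rw [hEO]


/-- Odd-rows/odd-columns submatrix of a `2n × 2n` matrix (1-based odd indices). -/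
def subOO (n : ℕ) (A : Matrix (Fin (2 * n)) (Fin (2 * n)) ℝ) :
    Matrix (Fin n) (Fin n) ℝ :=
  fun l m => A ⟨2 * l.val, by have := l.isLt; omega⟩ ⟨2 * m.val, by have := m.isLt; omega⟩

/-- The spectral radius (over ℂ) of a real square matrix. -/
noncomputable def specRad (n : ℕ) (A : Matrix (Fin n) (Fin n) ℝ) : ℝ≥0∞ :=
  spectralRadius ℂ (A.map (fun x : ℝ => (x : ℂ)))

attribute [local instance] Matrix.linftyOpNormedRing Matrix.linftyOpNormedAlgebra

lemma part1 (n : ℕ) (hn : 1 ≤ n)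
    (μ : Matrix (Fin (2 * n)) (Fin (2 * n)) ℝ)
    (hsymm : ∀ i j, μ i j = μ j i)
    (htri : ∀ i j : Fin (2 * n),
      ¬((i : ℕ) + 1 = (j : ℕ) ∨ (j : ℕ) + 1 = (i : ℕ)) → μ i j = 0)
    (hnonneg : ∀ i j, 0 ≤ μ i j)
    (B : ℝ)
    (hB : B = (Finset.univ : Finset (Fin (2 * n - 1))).sup'
      ⟨⟨0, by have := hn; omega⟩, Finset.mem_univ _⟩
      (fun r => μ ⟨r.val, by have := r.isLt; exact Nat.lt_of_lt_of_le this (Nat.sub_le _ _)⟩ ⟨r.val + 1, by have := r.isLt; exact Nat.add_lt_of_lt_sub this⟩))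
    (α : Fin (2 * n) → ℝ) (hα0 : ∀ r, 0 ≤ α r) (hα1 : ∑ r, α r = 1) :
    specRad n (subOO n ((Matrix.of fun i j => μ i j * α j) *
        (Matrix.of fun i j => μ i j * α j))) ≤ ENNReal.ofReal (B ^ 2 / 4) := by
  classical
  set M : Matrix (Fin (2*n)) (Fin (2*n)) ℝ := Matrix.of fun i j => μ i j * α j with hM
  set A : Matrix (Fin n) (Fin n) ℝ := subOO n (M * M) with hA
  -- extended entries
  set g : ℕ → ℝ := fun p => if h : p < 2*n then α ⟨p, h⟩ else 0 with hgdef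
  set w : ℕ → ℕ → ℝ := fun i j => if h : i < 2*n ∧ j < 2*n then μ ⟨i, h.1⟩ ⟨j, h.2⟩ else 0 with hwdef
  have hg : ∀ p, 0 ≤ g p := by
    intro p; simp only [hgdef]; split_ifs; exacts [hα0 _, le_refl 0]
  have hw : ∀ i j, 0 ≤ w i j := by
    intro i j; simp only [hwdef]; split_ifs; exacts [hnonneg _ _, le_refl 0]
  have hBf : ∀ r : Fin (2*n-1), μ ⟨r.val, by have := r.isLt; exact Nat.lt_of_lt_of_le this (Nat.sub_le _ _)⟩ ⟨r.val + 1, by have := r.isLt; exact Nat.add_lt_of_lt_sub this⟩ ≤ B := by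
    intro r
    rw [hB]
    exact Finset.le_sup' (fun r : Fin (2*n-1) => μ ⟨r.val, by have := r.isLt; exact Nat.lt_of_lt_of_le this (Nat.sub_le _ _)⟩ ⟨r.val + 1, by have := r.isLt; exact Nat.add_lt_of_lt_sub this⟩) (Finset.mem_univ r)
  have hB0 : 0 ≤ B :=
    le_trans (hnonneg _ _) (hBf ⟨0, by omega⟩)
  have hwle : ∀ i j, w i j ≤ B := by
    intro i j
    simp only [hwdef]
    split_ifs with h
    · by_cases hadj : i + 1 = j ∨ j + 1 = i
      · rcases hadj with hj | hj
        · subst hj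
          exact hBf ⟨i, by omega⟩
        · rw [hsymm]
          subst hj
          exact hBf ⟨j, by omega⟩
      · rw [htri ⟨i, h.1⟩ ⟨j, h.2⟩ hadj]
        exact hB0
    · exact hB0
  have hwz : ∀ i j : ℕ, ¬(i + 1 = j ∨ j + 1 = i) → w i j = 0 := by
    intro i j hadj
    simp only [hwdef]
    split_ifs with h
    · exact htri ⟨i, h.1⟩ ⟨j, h.2⟩ hadj
    · rfl
  -- entry formula
  have hMM : ∀ i k : Fin (2*n), (M * M) i k
      = ∑ j ∈ Finset.range (2*n), w i.val j * g j * (w j k.val * g k.val) := by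
    intro i k
    rw [Matrix.mul_apply, ← Fin.sum_univ_eq_sum_range (fun j => w i.val j * g j * (w j k.val * g k.val)) (2*n)]
    apply Finset.sum_congr rfl
    intro j _
    have h1 : w i.val j.val = μ i j := by
      simp only [hwdef]
      rw [dif_pos ⟨i.isLt, j.isLt⟩]
    have h2 : w j.val k.val = μ j k := by
      simp only [hwdef]
      rw [dif_pos ⟨j.isLt, k.isLt⟩]
    have h3 : g j.val = α j := by
      simp only [hgdef]; rw [dif_pos j.isLt]
    have h4 : g k.val = α k := by
      simp only [hgdef]; rw [dif_pos k.isLt]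
    simp only [hM, Matrix.of_apply, h1, h2, h3, h4]
  have hA0 : ∀ l m, 0 ≤ A l m := by
    intro l m
    rw [hA]
    show 0 ≤ (M * M) _ _
    rw [hMM]
    apply Finset.sum_nonneg
    intro j _
    exact mul_nonneg (mul_nonneg (hw _ _) (hg _)) (mul_nonneg (hw _ _) (hg _))
  -- total sum of g
  have hgsum : ∑ p ∈ Finset.range (2*n+1), g p = 1 := by
    rw [Finset.sum_range_succ]
    have h2 : g (2*n) = 0 := by simp [hgdef]
    rw [h2, add_zero, ← Fin.sum_univ_eq_sum_range (fun p => g p) (2*n), ← hα1]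
    apply Finset.sum_congr rfl
    intro j _
    simp only [hgdef]
    rw [dif_pos j.isLt]
  -- P bound
  set P : ℝ := ∑ p ∈ Finset.range (2*n), g p * g (p+1) with hP
  have hPnn : ∀ p, 0 ≤ g p * g (p+1) := fun p => mul_nonneg (hg p) (hg (p+1))
  have hP4 : P ≤ 1/4 := by
    have := adjProdSum (2*n) g hg
    rw [hgsum] at this
    simpa using this
  -- row sums
  have hrow : ∀ l : Fin n, ∑ m : Fin n, A l m ≤ B^2/4 := by
    intro l
    set i : ℕ := 2 * l.val with hi
    have hi2 : i + 1 < 2*n := by have := l.isLt; omega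
    set h : ℕ → ℝ := fun k => ∑ j ∈ Finset.range (2*n), w i j * g j * (w j k * g k) with hh
    have hhnn : ∀ k, 0 ≤ h k := by
      intro k
      apply Finset.sum_nonneg
      intro j _
      exact mul_nonneg (mul_nonneg (hw _ _) (hg _)) (mul_nonneg (hw _ _) (hg _))
    have step1 : ∑ m : Fin n, A l m = ∑ m ∈ Finset.range n, h (2*m) := by
      rw [← Fin.sum_univ_eq_sum_range (fun m => h (2*m)) n]
      apply Finset.sum_congr rfl
      intro m _
      rw [hA]
      show (M * M) _ _ = _
      rw [hMM]
    have step2 : ∑ m ∈ Finset.range n, h (2*m) ≤ ∑ k ∈ Finset.range (2*n), h k := by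
      have hinj : ∀ a ∈ Finset.range n, ∀ b ∈ Finset.range n, 2*a = 2*b → a = b := by
        intro a _ b _ hab; omega
      rw [← Finset.sum_image (f := h) (g := fun m => 2*m) hinj]
      apply Finset.sum_le_sum_of_subset_of_nonneg
      · intro k hk
        simp only [Finset.mem_image, Finset.mem_range] at hk ⊢
        omega
      · intro k _ _; exact hhnn k
    -- pointwise bound
    have hpt : ∀ j k : ℕ, w i j * g j * (w j k * g k)
        ≤ B^2 * (if i + 1 = j ∨ j + 1 = i then (if j + 1 = k ∨ k + 1 = j then g j * g k else 0) else 0) := by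
      intro j k
      by_cases h1 : i + 1 = j ∨ j + 1 = i
      · by_cases h2 : j + 1 = k ∨ k + 1 = j
        · rw [if_pos h1, if_pos h2]
          have e1 : w i j * g j ≤ B * g j := mul_le_mul_of_nonneg_right (hwle i j) (hg j)
          have e2 : w j k * g k ≤ B * g k := mul_le_mul_of_nonneg_right (hwle j k) (hg k)
          calc w i j * g j * (w j k * g k) ≤ (B * g j) * (B * g k) := by
                apply mul_le_mul e1 e2 (mul_nonneg (hw _ _) (hg _))
                exact mul_nonneg hB0 (hg _)
            _ = B^2 * (g j * g k) := by ring
        · rw [if_pos h1, if_neg h2, mul_zero, hwz j k h2]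
          nlinarith [hw i j, hg j, hg k]
      · rw [if_neg h1, mul_zero, hwz i j h1]
        nlinarith [hw j k, hg j, hg k]
    set T : ℝ := ∑ j ∈ Finset.range (2*n), ∑ k ∈ Finset.range (2*n),
        (if i + 1 = j ∨ j + 1 = i then (if j + 1 = k ∨ k + 1 = j then g j * g k else 0) else 0) with hT
    have step3 : ∑ k ∈ Finset.range (2*n), h k ≤ B^2 * T := by
      rw [hT, Finset.mul_sum]
      have : ∀ k ∈ Finset.range (2*n), h k = ∑ j ∈ Finset.range (2*n), w i j * g j * (w j k * g k) := by
        intro k _; rfl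
      rw [Finset.sum_congr rfl this, Finset.sum_comm]
      apply Finset.sum_le_sum
      intro j _
      rw [Finset.mul_sum]
      apply Finset.sum_le_sum
      intro k _
      exact hpt j k
    -- compute T
    set u : ℕ → ℝ := fun j => g j * g (j+1) + (if 0 < j then g j * g (j-1) else 0) with hu
    have hinner : ∀ j ∈ Finset.range (2*n), (∑ k ∈ Finset.range (2*n),
        (if i + 1 = j ∨ j + 1 = i then (if j + 1 = k ∨ k + 1 = j then g j * g k else 0) else 0))
        = (if i + 1 = j ∨ j + 1 = i then u j else 0) := by
      intro j hj
      simp only [Finset.mem_range] at hj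
      by_cases hc : i + 1 = j ∨ j + 1 = i
      · rw [if_pos hc]
        have : ∀ k ∈ Finset.range (2*n), (if i + 1 = j ∨ j + 1 = i then (if j + 1 = k ∨ k + 1 = j then g j * g k else 0) else 0)
            = (if j + 1 = k ∨ k + 1 = j then (fun k => g j * g k) k else 0) := by
          intro k _; rw [if_pos hc]
        rw [Finset.sum_congr rfl this, sum_ind (2*n) j (fun k => g j * g k)]
        simp only [hu]
        congr 1
        · by_cases hj1 : j + 1 < 2*n
          · rw [if_pos hj1]
          · rw [if_neg hj1]
            have : g (j+1) = 0 := by simp only [hgdef]; rw [dif_neg (by omega)]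
            rw [this, mul_zero]
        · by_cases hj0 : 0 < j
          · rw [if_pos ⟨hj0, by omega⟩, if_pos hj0]
          · rw [if_neg (by omega), if_neg hj0]
      · rw [if_neg hc]
        apply Finset.sum_eq_zero
        intro k _
        rw [if_neg hc]
    have hTval : T = u (i+1) + (if 0 < i then u (i-1) else 0) := by
      rw [hT, Finset.sum_congr rfl hinner, sum_ind (2*n) i u, if_pos hi2]
      by_cases hi0 : 0 < i
      · rw [if_pos ⟨hi0, by omega⟩, if_pos hi0]
      · rw [if_neg (by omega), if_neg hi0]
    have hTP : T ≤ P := by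
      by_cases hi0 : 0 < i
      · have hieven : i % 2 = 0 := by omega
        have hi2' : 2 ≤ i := by omega
        have hu1 : u (i+1) = g (i+1) * g (i+2) + g (i+1) * g i := by
          simp only [hu]
          rw [if_pos (by omega)]
          congr 2 <;> omega
        have hu2 : u (i-1) = g (i-1) * g i + g (i-1) * g (i-2) := by
          simp only [hu]
          rw [if_pos (by omega)]
          have e1 : i - 1 + 1 = i := by omega
          have e2 : i - 1 - 1 = i - 2 := by omega
          rw [e1, e2]
        have hsub : ({i-2, i-1, i, i+1} : Finset ℕ) ⊆ Finset.range (2*n) := by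
          intro x hx
          simp only [Finset.mem_insert, Finset.mem_singleton] at hx
          simp only [Finset.mem_range]
          omega
        have hsum4 : ∑ p ∈ ({i-2, i-1, i, i+1} : Finset ℕ), g p * g (p+1)
            = g (i-2) * g (i-1) + g (i-1) * g i + g i * g (i+1) + g (i+1) * g (i+2) := by
          rw [Finset.sum_insert (by simp only [Finset.mem_insert, Finset.mem_singleton]; omega),
            Finset.sum_insert (by simp only [Finset.mem_insert, Finset.mem_singleton]; omega),
            Finset.sum_insert (by simp only [Finset.mem_insert, Finset.mem_singleton]; omega), Finset.sum_singleton]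
          have e1 : i - 2 + 1 = i - 1 := by omega
          have e2 : i - 1 + 1 = i := by omega
          rw [e1, e2]
          ring
        have hle : ∑ p ∈ ({i-2, i-1, i, i+1} : Finset ℕ), g p * g (p+1) ≤ P := by
          rw [hP]
          apply Finset.sum_le_sum_of_subset_of_nonneg hsub
          intro p _ _; exact hPnn p
        rw [hTval, if_pos hi0, hu1, hu2]
        rw [hsum4] at hle
        linarith
      · have hi0' : i = 0 := by omega
        have hu1 : u 1 = g 1 * g 2 + g 1 * g 0 := by
          simp only [hu]
          rw [if_pos (by omega)]
        have hsub : ({0, 1} : Finset ℕ) ⊆ Finset.range (2*n) := by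
          intro x hx
          simp only [Finset.mem_insert, Finset.mem_singleton] at hx
          simp only [Finset.mem_range]
          omega
        have hsum2 : ∑ p ∈ ({0, 1} : Finset ℕ), g p * g (p+1) = g 0 * g 1 + g 1 * g 2 := by
          rw [Finset.sum_insert (by simp), Finset.sum_singleton]
        have hle : ∑ p ∈ ({0, 1} : Finset ℕ), g p * g (p+1) ≤ P := by
          rw [hP]
          apply Finset.sum_le_sum_of_subset_of_nonneg hsub
          intro p _ _; exact hPnn p
        rw [hTval, hi0', if_neg (by omega), hu1]
        rw [hsum2] at hle
        linarith
    have hTnn : 0 ≤ T := by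
      rw [hTval]
      have hun : ∀ j, 0 ≤ u j := by
        intro j
        simp only [hu]
        have := mul_nonneg (hg j) (hg (j+1))
        split_ifs with h'
        · exact add_nonneg this (mul_nonneg (hg j) (hg _))
        · linarith
      split_ifs with h'
      · exact add_nonneg (hun _) (hun _)
      · simpa using hun (i+1)
    calc ∑ m : Fin n, A l m = ∑ m ∈ Finset.range n, h (2*m) := step1
      _ ≤ ∑ k ∈ Finset.range (2*n), h k := step2
      _ ≤ B^2 * T := step3
      _ ≤ B^2 * P := by nlinarith [sq_nonneg B]
      _ ≤ B^2 / 4 := by nlinarith [sq_nonneg B]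
  -- conclude via operator norm
  haveI : Nonempty (Fin n) := ⟨⟨0, hn⟩⟩
  have hnorm : ‖A.map (fun x : ℝ => (x : ℂ))‖ ≤ B^2/4 := by
    rw [Matrix.linfty_opNorm_def]
    have hb4 : (0:ℝ) ≤ B^2/4 := by positivity
    rw [← Real.coe_toNNReal (B^2/4) hb4]
    rw [NNReal.coe_le_coe]
    apply Finset.sup_le
    intro l _
    rw [← NNReal.coe_le_coe]
    push_cast
    rw [Real.coe_toNNReal _ hb4]
    have hver : ∀ m : Fin n, ‖(A.map (fun x : ℝ => (x : ℂ))) l m‖ = A l m := by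
      intro m
      rw [Matrix.map_apply, Complex.norm_real, Real.norm_of_nonneg (hA0 l m)]
    calc ∑ m : Fin n, ‖(A.map (fun x : ℝ => (x : ℂ))) l m‖
        = ∑ m : Fin n, A l m := Finset.sum_congr rfl (fun m _ => hver m)
      _ ≤ B^2/4 := hrow l
  have h1 : specRad n A ≤ (‖A.map (fun x : ℝ => (x : ℂ))‖₊ : ℝ≥0∞) :=
    spectrum.spectralRadius_le_nnnorm (𝕜 := ℂ) _
  refine h1.trans ?_
  rw [← enorm_eq_nnnorm, ← ofReal_norm]
  exact ENNReal.ofReal_le_ofReal hnorm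

lemma eig_le_specRad (N : ℕ) (A : Matrix (Fin N) (Fin N) ℝ) (c : ℝ) (hc : 0 ≤ c)
    (v : Fin N → ℂ) (hv : v ≠ 0)
    (heig : (A.map (fun x : ℝ => (x:ℂ))).mulVec v = (c:ℂ) • v) :
    ENNReal.ofReal c ≤ specRad N A := by
  have hmem : (c:ℂ) ∈ spectrum ℂ (A.map (fun x : ℝ => (x:ℂ))) := by
    rw [spectrum.mem_iff]
    intro hunit
    apply hv
    obtain ⟨u, hu⟩ := hunit
    have h0 : (algebraMap ℂ (Matrix (Fin N) (Fin N) ℂ) (c:ℂ) - A.map (fun x : ℝ => (x:ℂ))).mulVec v = 0 := by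
      rw [Algebra.algebraMap_eq_smul_one, Matrix.sub_mulVec, Matrix.smul_mulVec,
        Matrix.one_mulVec, heig, sub_self]
    calc v = (1 : Matrix (Fin N) (Fin N) ℂ).mulVec v := (Matrix.one_mulVec v).symm
      _ = ((↑u⁻¹ : Matrix (Fin N) (Fin N) ℂ) * (↑u : Matrix (Fin N) (Fin N) ℂ)).mulVec v := by
          rw [Units.inv_mul]
      _ = (↑u⁻¹ : Matrix (Fin N) (Fin N) ℂ).mulVec ((↑u : Matrix (Fin N) (Fin N) ℂ).mulVec v) := by
          rw [Matrix.mulVec_mulVec]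
      _ = 0 := by rw [hu, h0, Matrix.mulVec_zero]
  have hnorm : ENNReal.ofReal c = (‖(c:ℂ)‖₊ : ℝ≥0∞) := by
    rw [← enorm_eq_nnnorm, ← ofReal_norm, Complex.norm_real, Real.norm_of_nonneg hc]
  rw [hnorm, specRad, spectralRadius]
  exact le_iSup₂ (f := fun k (_ : k ∈ spectrum ℂ (A.map (fun x : ℝ => (x:ℂ)))) => (‖k‖₊ : ℝ≥0∞)) (c:ℂ) hmem

/-- For `μ` symmetric tridiagonal with zero diagonal and nonnegative entries,
`α ≥ 0` with `Σ α_r = 1`, and `M = (μ_{rs} α_s)`, the spectral radius of `[M²]^(oo)`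
is at most `(1/4) max_r μ_{r,r+1}²`, and the supremum over all such `α` equals this
bound (it is attained). -/
theorem spectral_radius_bound_and_sup (n : ℕ) (hn : 1 ≤ n)
    (μ : Matrix (Fin (2 * n)) (Fin (2 * n)) ℝ)
    (hsymm : ∀ i j, μ i j = μ j i)
    (htri : ∀ i j : Fin (2 * n),
      ¬((i : ℕ) + 1 = (j : ℕ) ∨ (j : ℕ) + 1 = (i : ℕ)) → μ i j = 0)
    (hnonneg : ∀ i j, 0 ≤ μ i j)
    (B : ℝ)
    (hB : B = (Finset.univ : Finset (Fin (2 * n - 1))).sup'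
      ⟨⟨0, by omega⟩, Finset.mem_univ _⟩
      (fun r => μ ⟨r.val, by have := r.isLt; omega⟩ ⟨r.val + 1, by have := r.isLt; omega⟩)) :
    (∀ α : Fin (2 * n) → ℝ, (∀ r, 0 ≤ α r) → (∑ r, α r = 1) →
      specRad n (subOO n ((Matrix.of fun i j => μ i j * α j) *
        (Matrix.of fun i j => μ i j * α j))) ≤ ENNReal.ofReal (B ^ 2 / 4)) ∧
    (∃ α : Fin (2 * n) → ℝ, (∀ r, 0 ≤ α r) ∧ (∑ r, α r = 1) ∧
      specRad n (subOO n ((Matrix.of fun i j => μ i j * α j) *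
        (Matrix.of fun i j => μ i j * α j))) = ENNReal.ofReal (B ^ 2 / 4)) := by
  classical
  constructor
  · intro α hα0 hα1
    exact part1 n hn μ hsymm htri hnonneg B hB α hα0 hα1
  · obtain ⟨r₀, -, hr₀⟩ := Finset.exists_mem_eq_sup'
      (⟨⟨0, by omega⟩, Finset.mem_univ _⟩ : (Finset.univ : Finset (Fin (2*n-1))).Nonempty)
      (fun r : Fin (2*n-1) => μ ⟨r.val, by have := r.isLt; omega⟩ ⟨r.val + 1, by have := r.isLt; omega⟩)
    have hBr : B = μ ⟨r₀.val, by have := r₀.isLt; omega⟩ ⟨r₀.val + 1, by have := r₀.isLt; omega⟩ := by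
      rw [hB]; exact hr₀
    set p := r₀.val with hpdef
    have hp : p < 2*n - 1 := r₀.isLt
    set pe := if p % 2 = 0 then p else p + 1 with hpe
    set po := if p % 2 = 0 then p + 1 else p with hpo
    have hpe2 : pe < 2*n := by simp only [hpe]; split_ifs <;> omega
    have hpo2 : po < 2*n := by simp only [hpo]; split_ifs <;> omega
    have hpeE : pe % 2 = 0 := by simp only [hpe]; split_ifs <;> omega
    have hpoO : po % 2 = 1 := by simp only [hpe, hpo]; split_ifs <;> omega
    have hadjpo : (pe + 1 = po ∨ po + 1 = pe) := by simp only [hpe, hpo]; split_ifs <;> omega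
    have hμB : μ ⟨pe, hpe2⟩ ⟨po, hpo2⟩ = B := by
      by_cases h : p % 2 = 0
      · simp only [hpe, hpo, if_pos h]
        exact hBr.symm
      · simp only [hpe, hpo, if_neg h]
        rw [hsymm]
        exact hBr.symm
    have hB0 : 0 ≤ B := le_of_le_of_eq (hnonneg _ _) hμB
    set m₀ : Fin n := ⟨pe / 2, by omega⟩ with hm₀
    have h2m₀ : 2 * (pe / 2) = pe := by omega
    set ae : Fin (2*n) := ⟨pe, hpe2⟩ with hae
    set ao : Fin (2*n) := ⟨po, hpo2⟩ with hao
    set α : Fin (2*n) → ℝ := fun r => if (r:ℕ) = pe ∨ (r:ℕ) = po then (1/2:ℝ) else 0 with hα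
    have hα0 : ∀ r, 0 ≤ α r := by
      intro r; simp only [hα]; split_ifs <;> norm_num
    have hαzero : ∀ K : Fin (2*n), (K:ℕ) ≠ pe → (K:ℕ) ≠ po → α K = 0 := by
      intro K h1 h2
      simp only [hα]
      rw [if_neg (by tauto)]
    have hαae : α ae = 1/2 := by
      simp only [hα]
      simp
      exact fun h => absurd rfl h
    have hαao : α ao = 1/2 := by
      simp only [hα]
      simp
      exact fun _ => rfl
    have hα1 : ∑ r, α r = 1 := by
      have hd : ∀ r : Fin (2*n), α r
          = (if r = ae then (1/2:ℝ) else 0) + (if r = ao then (1/2:ℝ) else 0) := by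
        intro r
        by_cases h1 : (r:ℕ) = pe
        · have hre : r = ae := Fin.ext h1
          rw [hre, hαae, if_pos rfl, if_neg (by
            intro hh
            have : pe = po := by rw [hae, hao] at hh; exact congrArg Fin.val hh
            omega)]
          norm_num
        · by_cases h2 : (r:ℕ) = po
          · have hro : r = ao := Fin.ext h2
            rw [hro, hαao, if_neg (by
              intro hh
              have : po = pe := by rw [hae, hao] at hh; exact congrArg Fin.val hh
              omega), if_pos rfl]
            norm_num
          · rw [hαzero r h1 h2, if_neg (fun hh => h1 (by rw [hh])),
              if_neg (fun hh => h2 (by rw [hh]))]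
            norm_num
      rw [Finset.sum_congr rfl (fun r _ => hd r), Finset.sum_add_distrib,
        Finset.sum_ite_eq' Finset.univ ae (fun _ => (1/2:ℝ)),
        Finset.sum_ite_eq' Finset.univ ao (fun _ => (1/2:ℝ)),
        if_pos (Finset.mem_univ ae), if_pos (Finset.mem_univ ao)]
      norm_num
    refine ⟨α, hα0, hα1, ?_⟩
    set M : Matrix (Fin (2*n)) (Fin (2*n)) ℝ := Matrix.of fun i j => μ i j * α j with hM
    set A : Matrix (Fin n) (Fin n) ℝ := subOO n (M * M) with hA
    apply le_antisymm
    · exact part1 n hn μ hsymm htri hnonneg B hB α hα0 hα1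
    · rcases eq_or_lt_of_le hB0 with hB0' | hBpos
      · rw [← hB0']
        norm_num
      · -- facts about columns of A
        have hcolK : ∀ (I K : Fin (2*n)), α K = 0 → (M * M) I K = 0 := by
          intro I K hK
          rw [Matrix.mul_apply]
          apply Finset.sum_eq_zero
          intro j _
          show (μ I j * α j) * (μ j K * α K) = 0
          rw [hK, mul_zero, mul_zero]
        have hcol : ∀ (l m : Fin n), m ≠ m₀ → A l m = 0 := by
          intro l m hm
          show (M * M) _ _ = 0
          apply hcolK
          apply hαzero
          · show 2 * (m:ℕ) ≠ pe
            intro h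
            exact hm (Fin.ext (show (m:ℕ) = pe/2 by omega))
          · show 2 * (m:ℕ) ≠ po
            omega
        have hdiagFin : ∀ I K : Fin (2*n), (I:ℕ) = pe → (K:ℕ) = pe → (M * M) I K = B^2/4 := by
          intro I K hI hK
          rw [Matrix.mul_apply]
          have hαK : α K = 1/2 := by
            simp only [hα]
            rw [if_pos (Or.inl hK)]
          have split : ∀ j ∈ (Finset.univ : Finset (Fin (2*n))), M I j * M j K
              = (if j = ao then B * (1/2) * (B * (1/2)) else 0) := by
            intro j _
            show (μ I j * α j) * (μ j K * α K) = _
            by_cases hj : j = ao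
            · rw [if_pos hj]
              subst hj
              have h1 : μ I ao = B := by
                have hIe : I = ae := Fin.ext hI
                rw [hIe]
                exact hμB
              have h2 : μ ao K = B := by
                rw [hsymm]
                have hKe : K = ae := Fin.ext hK
                rw [hKe]
                exact hμB
              rw [h1, h2, hαao, hαK]
            · rw [if_neg hj]
              by_cases hj2 : (j:ℕ) = pe
              · have hz : μ I j = 0 := htri I j (by rw [hI, hj2]; omega)
                rw [hz, zero_mul, zero_mul]
              · have hz : α j = 0 := hαzero j hj2 (fun hp' => hj (Fin.ext hp'))
                rw [hz, mul_zero, zero_mul]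
          rw [Finset.sum_congr rfl split,
            Finset.sum_ite_eq' Finset.univ ao (fun _ => B * (1/2) * (B * (1/2))),
            if_pos (Finset.mem_univ ao)]
          ring
        have hdiag : A m₀ m₀ = B^2/4 := by
          apply hdiagFin
          · show 2 * (pe/2) = pe
            omega
          · show 2 * (pe/2) = pe
            omega
        set v : Fin n → ℂ := fun l => ((A l m₀ : ℝ) : ℂ) with hv
        have hvne : v ≠ 0 := by
          intro h
          have h0 : ((A m₀ m₀ : ℝ) : ℂ) = 0 := congrFun h m₀
          rw [hdiag] at h0
          rw [Complex.ofReal_eq_zero] at h0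
          nlinarith
        have heig : (A.map (fun x : ℝ => (x:ℂ))).mulVec v = ((B^2/4 : ℝ):ℂ) • v := by
          funext l
          show ∑ m : Fin n, (A.map (fun x : ℝ => (x:ℂ))) l m * v m = _
          rw [Finset.sum_eq_single m₀]
          · show ((A l m₀ : ℝ):ℂ) * ((A m₀ m₀ : ℝ):ℂ) = ((B^2/4 : ℝ):ℂ) * ((A l m₀ : ℝ):ℂ)
            rw [hdiag]
            ring
          · intro m _ hm
            show ((A l m : ℝ):ℂ) * v m = 0
            rw [hcol l m hm]
            simp
          · intro hmem
            exact absurd (Finset.mem_univ m₀) hmem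
        exact eig_le_specRad n A (B^2/4) (by positivity) v hvne heig
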